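/- arXiv:1903.10636 — 4 statements merged into one kernel-verified Lean document; each statement's English description precedes it below -/
import Mathlib

section
/- Let P = (p_1, …, p_m), m > 1, be a consistent set of monitoring paths, where p_i has length d_i (number of nodes). Then for each i, the number of distinct encodings among the nodes of p_i, i.e. |{b(v) : v appears on p_i}|, is at most min{d_i, 2·(m−1)}. -/
/-- The contiguous segment of the list `l` between (the first occurrences of) the
nodes `u` and `w`, inclusive, taken in the order of `l`. -/
def seg {V : Type*} [DecidableEq V] (l : List V) (u w : V) : List V :=
  (l.drop (min (l.idxOf u) (l.idxOf w))).take
    (max (l.idxOf u) (l.idxOf w) - min (l.idxOf u) (l.idxOf w) + 1)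

/-- Two paths are consistent if, for any two nodes `u, w` appearing on both, the
contiguous segment of one between `u` and `w` equals, up to reversal, the
contiguous segment of the other between `u` and `w`. -/
def ConsistentPair {V : Type*} [DecidableEq V] (l l' : List V) : Prop :=
  ∀ u w : V, u ∈ l → w ∈ l → u ∈ l' → w ∈ l' →
    seg l u w = seg l' u w ∨ seg l u w = (seg l' u w).reverse

/-- A family of paths is consistent if every two of its paths are consistent. -/
def Consistent {V : Type*} [DecidableEq V] {ι : Type*} (p : ι → List V) : Prop :=
  ∀ i j, ConsistentPair (p i) (p j)

/-- The encoding of a node `v` w.r.t. monitoring paths `p`: the set of indices of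
paths on which `v` appears. -/
def encoding {V : Type*} [DecidableEq V] {m : ℕ} (p : Fin m → List V) (v : V) :
    Finset (Fin m) :=
  Finset.univ.filter fun i => v ∈ p i

lemma seg_subset {V : Type*} [DecidableEq V] (l : List V) (u w x : V)
    (hx : x ∈ seg l u w) : x ∈ l := by
  unfold seg at hx
  exact List.mem_of_mem_drop (List.mem_of_mem_take hx)

lemma mem_seg_of_between {V : Type*} [DecidableEq V] (l : List V) (hl : l.Nodup)
    (a b c : ℕ) (hab : a ≤ b) (hbc : b ≤ c) (hc : c < l.length) :
    l[b]'(by omega) ∈ seg l (l[a]'(by omega)) (l[c]'(by omega)) := by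
  unfold seg
  rw [List.Nodup.idxOf_getElem hl a (by omega), List.Nodup.idxOf_getElem hl c (by omega),
    min_eq_left (by omega), max_eq_right (by omega)]
  have hlen : b - a < ((l.drop a).take (c - a + 1)).length := by
    simp only [List.length_take, List.length_drop]
    omega
  have hba : a + (b - a) = b := by omega
  have heq : ((l.drop a).take (c - a + 1))[b - a]'hlen = l[b]'(by omega) := by
    rw [List.getElem_take, List.getElem_drop]
    simp only [hba]
  rw [← heq]
  exact List.getElem_mem _

open Finset in
theorem interval_patterns {ι : Type*} [DecidableEq ι] (J : Finset ι) (hJ : J.Nonempty)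
    (d : ℕ) (f : ℕ → Finset ι) (hsub : ∀ t, t < d → f t ⊆ J)
    (hconv : ∀ j, ∀ a b c : ℕ, a ≤ b → b ≤ c → c < d → j ∈ f a → j ∈ f c → j ∈ f b) :
    ((Finset.range d).image f).card ≤ 2 * J.card := by
  classical
  by_cases hall : ∀ t, t < d → f t = (∅ : Finset ι)
  · have hsub1 : (Finset.range d).image f ⊆ {(∅ : Finset ι)} := by
      intro S hS
      simp only [mem_image, mem_range] at hS
      obtain ⟨t, ht, rfl⟩ := hS
      simp [hall t ht]
    have h1 := card_le_card hsub1
    simp only [card_singleton] at h1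
    have h2 := hJ.card_pos
    omega
  push_neg at hall
  obtain ⟨t0, ht0d, ht0⟩ := hall
  set T : Finset (Finset ι) := (Finset.range d).image f with hT
  set occ : ι → Set ℕ := fun j => {t | t < d ∧ j ∈ f t} with hocc
  set lep : ι → ℕ := fun j => sInf (occ j) with hlepdef
  set rep : ι → ℕ := fun j => sSup (occ j) with hrepdef
  set tmin : Finset ι → ℕ := fun S => sInf {t | t < d ∧ f t = S} with htmindef
  have hbdd : ∀ j, BddAbove (occ j) := fun j => ⟨d, fun t ht => ht.1.le⟩
  have htmin_mem : ∀ S ∈ T, tmin S < d ∧ f (tmin S) = S := by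
    intro S hS
    simp only [hT, mem_image, mem_range] at hS
    obtain ⟨t, ht, hft⟩ := hS
    exact Nat.sInf_mem (⟨t, ht, hft⟩ : {t | t < d ∧ f t = S}.Nonempty)
  have htmin_min : ∀ S : Finset ι, ∀ t, t < d → f t = S → tmin S ≤ t := by
    intro S t ht hft
    exact Nat.sInf_le ⟨ht, hft⟩
  have hlep_mem : ∀ j, (occ j).Nonempty → lep j < d ∧ j ∈ f (lep j) :=
    fun j h => Nat.sInf_mem h
  have hrep_mem : ∀ j, (occ j).Nonempty → rep j < d ∧ j ∈ f (rep j) :=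
    fun j h => Nat.sSup_mem h (hbdd j)
  have hlep_le : ∀ j t, t < d → j ∈ f t → lep j ≤ t := fun j t ht hj => Nat.sInf_le ⟨ht, hj⟩
  have hrep_ge : ∀ j t, t < d → j ∈ f t → t ≤ rep j := fun j t ht hj => le_csSup (hbdd j) ⟨ht, hj⟩
  set Js : Finset ι := J.filter (fun j => ∃ t, t < d ∧ j ∈ f t) with hJs
  have hJs_ne : Js.Nonempty := by
    obtain ⟨j0, hj0⟩ := ht0
    exact ⟨j0, by simp only [hJs, mem_filter]; exact ⟨hsub t0 ht0d hj0, t0, ht0d, hj0⟩⟩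
  obtain ⟨jm, hjmJs, hjm⟩ := Finset.exists_max_image Js rep hJs_ne
  -- key case analysis for S ∈ T, when no interval starts at tmin S
  have hkey : ∀ S ∈ T, (¬ ∃ j, j ∈ f (tmin S) ∧ lep j = tmin S) → S ≠ ∅ →
      0 < tmin S ∧ ∃ j, j ∈ Js ∧ rep j = tmin S - 1 := by
    intro S hS hnostart hSne
    obtain ⟨htd, htf⟩ := htmin_mem S hS
    have htpos : 0 < tmin S := by
      rcases Nat.eq_zero_or_pos (tmin S) with h0 | h
      · exfalso
        obtain ⟨j, hj⟩ := Finset.nonempty_iff_ne_empty.2 hSne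
        have hjf : j ∈ f (tmin S) := by rw [htf]; exact hj
        have hle : lep j ≤ tmin S := hlep_le j _ htd hjf
        exact hnostart ⟨j, hjf, by omega⟩
      · exact h
    refine ⟨htpos, ?_⟩
    have hprev_ne : f (tmin S - 1) ≠ S := by
      intro h
      have hle : tmin S ≤ tmin S - 1 := htmin_min S _ (by omega) h
      omega
    have hsub2 : f (tmin S) ⊆ f (tmin S - 1) := by
      intro j hj
      by_contra hjnot
      have hle : lep j ≤ tmin S := hlep_le j _ htd hj
      rcases eq_or_lt_of_le hle with heq | hlt
      · exact hnostart ⟨j, hj, heq⟩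
      · obtain ⟨hld, hlf⟩ := hlep_mem j ⟨tmin S, htd, hj⟩
        exact hjnot (hconv j (lep j) (tmin S - 1) (tmin S) (by omega) (by omega) htd hlf hj)
    obtain ⟨j, hjprev, hjnot⟩ : ∃ j, j ∈ f (tmin S - 1) ∧ j ∉ f (tmin S) := by
      by_contra hno
      push_neg at hno
      exact hprev_ne ((Finset.Subset.antisymm hno hsub2).trans htf)
    have hoccj : (occ j).Nonempty := ⟨tmin S - 1, by omega, hjprev⟩
    have hrge : tmin S - 1 ≤ rep j := hrep_ge j _ (by omega) hjprev
    have hreq : rep j = tmin S - 1 := by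
      rcases eq_or_lt_of_le hrge with heq | hlt
      · omega
      · exfalso
        obtain ⟨hrd, hrf⟩ := hrep_mem j hoccj
        exact hjnot (hconv j (tmin S - 1) (tmin S) (rep j) (by omega) (by omega) hrd hjprev hrf)
    refine ⟨j, ?_, hreq⟩
    simp only [hJs, mem_filter]
    exact ⟨hsub _ (by omega) hjprev, tmin S - 1, by omega, hjprev⟩
  -- the injection
  set φ : Finset ι → ι × Bool := fun S =>
    if h : ∃ j, j ∈ f (tmin S) ∧ lep j = tmin S then (h.choose, true)
    else if h2 : ∃ j, j ∈ Js ∧ rep j = tmin S - 1 ∧ S ≠ ∅ then (h2.choose, false)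
    else (jm, false) with hφ
  have hmaps : ∀ S ∈ T, φ S ∈ J ×ˢ (Finset.univ : Finset Bool) := by
    intro S hS
    obtain ⟨htd, htf⟩ := htmin_mem S hS
    simp only [hφ]
    split_ifs with h h2
    · exact Finset.mem_product.2 ⟨hsub _ htd h.choose_spec.1, mem_univ _⟩
    · exact Finset.mem_product.2 ⟨Finset.mem_of_mem_filter _ h2.choose_spec.1, mem_univ _⟩
    · exact Finset.mem_product.2 ⟨Finset.mem_of_mem_filter _ hjmJs, mem_univ _⟩
  -- a pattern mapped to (j, false) with j of maximal rep must be empty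
  have hmaxrep : ∀ S ∈ T, (¬ ∃ j, j ∈ f (tmin S) ∧ lep j = tmin S) →
      (∃ j, j ∈ Js ∧ rep j = tmin S - 1 ∧ S ≠ ∅) → ∀ k, k ∈ Js → rep k = tmin S - 1 →
        (∀ x ∈ Js, rep x ≤ rep k) → False := by
    intro S hS h h2 k hkJs hkrep hkmax
    obtain ⟨htd, htf⟩ := htmin_mem S hS
    obtain ⟨j2, hj2Js, hj2rep, hSne⟩ := h2
    have h01 : 0 < tmin S := (hkey S hS h hSne).1
    obtain ⟨x, hx⟩ := Finset.nonempty_iff_ne_empty.2 hSne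
    have hxf : x ∈ f (tmin S) := by rw [htf]; exact hx
    have hxJs : x ∈ Js := by
      simp only [hJs, mem_filter]
      exact ⟨hsub _ htd hxf, tmin S, htd, hxf⟩
    have h3 := hkmax x hxJs
    have h4 : tmin S ≤ rep x := hrep_ge x _ htd hxf
    omega
  have hinj : Set.InjOn φ T := by
    intro S hS S' hS' heq
    obtain ⟨htd, htf⟩ := htmin_mem S hS
    obtain ⟨htd', htf'⟩ := htmin_mem S' hS'
    by_cases h : ∃ j, j ∈ f (tmin S) ∧ lep j = tmin S
    all_goals by_cases h' : ∃ j, j ∈ f (tmin S') ∧ lep j = tmin S'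
    · -- both start
      rw [hφ] at heq
      simp only [dif_pos h, dif_pos h'] at heq
      have hje : h.choose = h'.choose := congrArg Prod.fst heq
      obtain ⟨hj1, hl1⟩ := h.choose_spec
      obtain ⟨hj2, hl2⟩ := h'.choose_spec
      have hte : tmin S = tmin S' := by rw [← hl1, ← hl2, hje]
      rw [← htf, ← htf', hte]
    · -- S start, S' not : bool mismatch
      exfalso
      rw [hφ] at heq
      simp only [dif_pos h, dif_neg h'] at heq
      split_ifs at heq with h2'
      · exact Bool.noConfusion (congrArg Prod.snd heq)
      · exact Bool.noConfusion (congrArg Prod.snd heq)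
    · exfalso
      rw [hφ] at heq
      simp only [dif_neg h, dif_pos h'] at heq
      split_ifs at heq with h2
      · exact Bool.noConfusion (congrArg Prod.snd heq)
      · exact Bool.noConfusion (congrArg Prod.snd heq)
    · -- neither starts
      rw [hφ] at heq
      simp only [dif_neg h, dif_neg h'] at heq
      by_cases h2 : ∃ j, j ∈ Js ∧ rep j = tmin S - 1 ∧ S ≠ ∅
      all_goals by_cases h2' : ∃ j, j ∈ Js ∧ rep j = tmin S' - 1 ∧ S' ≠ ∅
      · simp only [dif_pos h2, dif_pos h2'] at heq
        have hje : h2.choose = h2'.choose := congrArg Prod.fst heq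
        obtain ⟨hjJ1, hr1, hne1⟩ := h2.choose_spec
        obtain ⟨hjJ2, hr2, hne2⟩ := h2'.choose_spec
        have h01 : 0 < tmin S := (hkey S hS h hne1).1
        have h02 : 0 < tmin S' := (hkey S' hS' h' hne2).1
        rw [hje] at hr1
        have hte : tmin S = tmin S' := by omega
        rw [← htf, ← htf', hte]
      · exfalso
        simp only [dif_pos h2, dif_neg h2'] at heq
        have hje : h2.choose = jm := congrArg Prod.fst heq
        obtain ⟨hjJ1, hr1, hne1⟩ := h2.choose_spec
        rw [hje] at hjJ1 hr1
        exact hmaxrep S hS h h2 jm hjmJs hr1 hjm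
      · exfalso
        simp only [dif_neg h2, dif_pos h2'] at heq
        have hje : jm = h2'.choose := congrArg Prod.fst heq
        obtain ⟨hjJ1, hr1, hne1⟩ := h2'.choose_spec
        rw [← hje] at hjJ1 hr1
        exact hmaxrep S' hS' h' h2' jm hjmJs hr1 hjm
      · -- both third: both empty
        have e1 : S = ∅ := by
          by_contra hSne
          obtain ⟨-, j, hjJs, hjr⟩ := hkey S hS h hSne
          exact h2 ⟨j, hjJs, hjr, hSne⟩
        have e2 : S' = ∅ := by
          by_contra hSne
          obtain ⟨-, j, hjJs, hjr⟩ := hkey S' hS' h' hSne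
          exact h2' ⟨j, hjJs, hjr, hSne⟩
        rw [e1, e2]
  calc T.card ≤ (J ×ˢ (Finset.univ : Finset Bool)).card :=
        Finset.card_le_card_of_injOn φ hmaps hinj
    _ = 2 * J.card := by simp [Finset.card_product, mul_comm]

/-- Lemma IV.8: with `m > 1` consistent routing paths, the number of distinct
encodings among the nodes of path `p i` (of length `d_i = (p i).length`) is at
most `min d_i (2·(m−1))`. -/
theorem distinct_encodings_le_consistent {V : Type*} [DecidableEq V] {m : ℕ}
    (hm : 1 < m) (p : Fin m → List V) (hnodup : ∀ i, (p i).Nodup)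
    (hcons : Consistent p) (i : Fin m) :
    ((p i).toFinset.image (encoding p)).card ≤ min (p i).length (2 * (m - 1)) := by
  classical
  refine le_min ?_ ?_
  · calc ((p i).toFinset.image (encoding p)).card ≤ (p i).toFinset.card :=
        Finset.card_image_le
    _ = (p i).length := List.toFinset_card_of_nodup (hnodup i)
  · set d := (p i).length with hd
    rcases Nat.eq_zero_or_pos d with hd0 | hdpos
    · have hnil : p i = [] := List.length_eq_zero_iff.1 hd0
      simp [hnil]
    have hne : p i ≠ [] := by
      intro h
      rw [h] at hd
      simp at hd
      omega
    set v0 := (p i).head hne with hv0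
    set node : ℕ → V := fun t => (p i).getD t v0 with hnode
    have hnode_get : ∀ t, ∀ ht : t < d, node t = (p i)[t]'ht :=
      fun t ht => List.getD_eq_getElem _ _ ht
    have hnode_mem : ∀ t, t < d → node t ∈ p i := by
      intro t ht
      rw [hnode_get t ht]
      exact List.getElem_mem _
    have h1 : (p i).toFinset = (Finset.range d).image node := by
      ext v
      simp only [Finset.mem_image, Finset.mem_range, List.mem_toFinset]
      constructor
      · intro hv
        have hidx : (p i).idxOf v < d := List.idxOf_lt_length_iff.2 hv
        refine ⟨(p i).idxOf v, hidx, ?_⟩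
        rw [hnode_get _ hidx]
        exact List.getElem_idxOf hidx
      · rintro ⟨t, ht, rfl⟩
        exact hnode_mem t ht
    rw [h1, Finset.image_image]
    have hienc : ∀ t, t < d → i ∈ encoding p (node t) := by
      intro t ht
      exact Finset.mem_filter.2 ⟨Finset.mem_univ _, hnode_mem t ht⟩
    have hcard : ((Finset.range d).image (encoding p ∘ node)).card
        = ((Finset.range d).image (fun t => (encoding p (node t)).erase i)).card := by
      have h2 : (Finset.range d).image (fun t => (encoding p (node t)).erase i)
          = ((Finset.range d).image (encoding p ∘ node)).image (fun S => S.erase i) := by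
        rw [Finset.image_image]
        rfl
      rw [h2]
      symm
      apply Finset.card_image_of_injOn
      intro S1 hS1 S2 hS2 hE
      simp only [Finset.coe_image, Set.mem_image, Finset.mem_coe, Finset.mem_range] at hS1 hS2
      obtain ⟨t1, ht1, rfl⟩ := hS1
      obtain ⟨t2, ht2, rfl⟩ := hS2
      have hi1 := hienc t1 ht1
      have hi2 := hienc t2 ht2
      simp only [Function.comp_apply] at hE ⊢
      rw [← Finset.insert_erase hi1, ← Finset.insert_erase hi2]
      exact congrArg (insert i) hE
    rw [hcard]
    have hJcard : ((Finset.univ : Finset (Fin m)).erase i).card = m - 1 := by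
      rw [Finset.card_erase_of_mem (Finset.mem_univ i), Finset.card_univ, Fintype.card_fin]
    have hJne : ((Finset.univ : Finset (Fin m)).erase i).Nonempty := by
      rw [← Finset.card_pos, hJcard]
      omega
    have hmain := interval_patterns ((Finset.univ : Finset (Fin m)).erase i) hJne d
      (fun t => (encoding p (node t)).erase i)
      (fun t _ => Finset.erase_subset_erase i (Finset.subset_univ _))
      ?_
    · rw [hJcard] at hmain
      exact hmain
    intro j a b c hab hbc hcd hja hjc
    rw [Finset.mem_erase] at hja hjc ⊢
    obtain ⟨hji, hja⟩ := hja
    obtain ⟨-, hjc⟩ := hjc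
    refine ⟨hji, ?_⟩
    simp only [encoding, Finset.mem_filter, Finset.mem_univ, true_and] at hja hjc ⊢
    -- node b ∈ p j
    have had : a < d := by omega
    have hbd : b < d := by omega
    have hbetween : node b ∈ seg (p i) (node a) (node c) := by
      rw [hnode_get a had, hnode_get b hbd, hnode_get c hcd]
      exact mem_seg_of_between (p i) (hnodup i) a b c hab hbc hcd
    rcases hcons i j (node a) (node c) (hnode_mem a had) (hnode_mem c hcd) hja hjc
      with hseg | hseg
    · rw [hseg] at hbetween
      exact seg_subset _ _ _ _ hbetween
    · rw [hseg, List.mem_reverse] at hbetween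
      exact seg_subset _ _ _ _ hbetween
end

section
/- Let V be a finite set of n nodes and P = (p_1, …, p_m) a consistent set of monitoring paths all having the same final node r, with each path of length at most d_max (number of nodes). Let z(k) = max{0, 2k−1}. If d_max ≥ ⌈log_2 m⌉ + 1, then the number of identifiable nodes is at most min{z(m), n} = min{2m−1, n}. If 2 ≤ d_max < ⌈log_2 m⌉ + 1, then the number of identifiable nodes is at most min{n, 1 + ⌊m / 2^{d_max−2}⌋ · z(2^{d_max−2}) + z(m mod 2^{d_max−2})}. -/
/-- A node is identifiable iff its encoding is nonempty and distinct from the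
encoding of every other node. -/
def Identifiable {V : Type*} [DecidableEq V] {m : ℕ} (p : Fin m → List V) (v : V) :
    Prop :=
  encoding p v ≠ ∅ ∧ ∀ w : V, w ≠ v → encoding p w ≠ encoding p v

/-- `z k = max {0, 2k − 1}`, the number of nodes of a full binary tree with `k`
leaves (natural subtraction realizes the `max` with `0`). -/
def z (k : ℕ) : ℕ := 2 * k - 1


set_option linter.unusedSectionVars false



/-- Bound for laminar families of chain-height `≤ d` over a ground set of size `n`. -/
def psi (q n : ℕ) : ℕ := (n / q) * z q + z (n % q)

def Q : ℕ → ℕ → ℕ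
  | 0, _ => 0
  | (d+1), n => min (2 * n - 2) (psi (2 ^ d) n)

lemma psi_of_lt {q n : ℕ} (h : n < q) : psi q n = z n := by
  simp [psi, Nat.div_eq_of_lt h, Nat.mod_eq_of_lt h, z]

lemma psi_add_q {q : ℕ} (hq : 1 ≤ q) (n : ℕ) : psi q (n + q) = psi q n + z q := by
  have h1 : (n + q) / q = n / q + 1 := by
    rw [Nat.add_div_right _ hq]
  have h2 : (n + q) % q = n % q := Nat.add_mod_right n q
  simp [psi, h1, h2]; ring

lemma psi_zero {q : ℕ} : psi q 0 = 0 := by simp [psi, z]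

lemma psi_super {q : ℕ} (hq : 1 ≤ q) : ∀ s a b : ℕ, a + b = s →
    psi q a + psi q b ≤ psi q s := by
  intro s
  induction s using Nat.strong_induction_on with
  | _ s ih =>
    intro a b hab
    rcases le_or_gt q a with ha | ha
    · have h1 : a = (a - q) + q := by omega
      have h2 : s = ((a - q) + b) + q := by omega
      rw [h1, psi_add_q hq, h2, psi_add_q hq]
      have := ih ((a - q) + b) (by omega) (a - q) b rfl
      omega
    · rcases le_or_gt q b with hb | hb
      · have h1 : b = (b - q) + q := by omega
        have h2 : s = (a + (b - q)) + q := by omega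
        rw [h1, psi_add_q hq, h2, psi_add_q hq]
        have := ih (a + (b - q)) (by omega) a (b - q) rfl
        omega
      · rcases le_or_gt q s with hs | hs
        · have h2 : s = (s - q) + q := by omega
          rw [psi_of_lt ha, psi_of_lt hb, h2, psi_add_q hq, psi_of_lt (by omega)]
          simp only [z]; omega
        · rw [psi_of_lt ha, psi_of_lt hb, psi_of_lt hs]
          simp only [z]; omega

lemma psi_mono {q : ℕ} (hq : 1 ≤ q) {a b : ℕ} (h : a ≤ b) : psi q a ≤ psi q b := by
  have := psi_super hq b a (b - a) (by omega)
  omega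

lemma psi_pos {q s : ℕ} (hq : 1 ≤ q) (hs : 1 ≤ s) : 1 ≤ psi q s := by
  have h := psi_mono hq hs
  rcases le_or_gt q 1 with h1 | h1
  · have hq1 : q = 1 := by omega
    subst hq1
    have : psi 1 1 = 1 := by rw [show (1:ℕ) = 0 + 1 from rfl, psi_add_q le_rfl, psi_zero]; simp [z]
    omega
  · rw [psi_of_lt h1] at h; simp [z] at h ⊢; omega

lemma Q_le (d n : ℕ) : Q d n ≤ 2 * n - 2 := by
  cases d with
  | zero => simp [Q]
  | succ d => exact min_le_left _ _

/-- key step: `1 + psi q s ≤ psi (2q) s` for `s ≥ 2q`. -/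
lemma psi_double {q : ℕ} (hq : 1 ≤ q) : ∀ s, 2 * q ≤ s → 1 + psi q s ≤ psi (2 * q) s := by
  intro s
  induction s using Nat.strong_induction_on with
  | _ s ih =>
    intro hs
    obtain ⟨t, rfl⟩ : ∃ t, s = t + 2 * q := ⟨s - 2 * q, by omega⟩
    rcases le_or_gt (2 * q) t with h4 | h4
    · -- recurse
      have e1 : psi q (t + 2 * q) = psi q t + z q + z q := by
        rw [show t + 2 * q = t + q + q by ring, psi_add_q hq, psi_add_q hq]
      have e2 : psi (2*q) (t + 2 * q) = psi (2*q) t + z (2*q) := psi_add_q (by omega) t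
      have := ih t (by omega) h4
      simp only [z] at *
      omega
    · -- base : t < 2q
      have hrhs : psi (2*q) (t + 2*q) = psi (2*q) t + z (2*q) := psi_add_q (by omega) t
      have hrhs2 : psi (2*q) t = z t := psi_of_lt h4
      have hlhs : psi q (t + 2*q) = psi q t + z q + z q := by
        rw [show t + 2 * q = t + q + q by ring, psi_add_q hq, psi_add_q hq]
      rcases le_or_gt q t with hbq | hbq
      · obtain ⟨c, rfl⟩ : ∃ c, t = c + q := ⟨t - q, by omega⟩
        have : psi q (c + q) = z c + z q := by
          rw [psi_add_q hq, psi_of_lt (by omega)]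
        simp only [z] at *; omega
      · have : psi q t = z t := psi_of_lt hbq
        simp only [z] at *; omega

lemma one_add_Q_le {d s : ℕ} (hs : 1 ≤ s) : 1 + Q d s ≤ psi (2 ^ d) s := by
  induction d generalizing s with
  | zero =>
    simp only [Q, pow_zero]
    have : psi 1 s = s := by
      simp [psi, Nat.div_one, Nat.mod_one, z]
    omega
  | succ d ih =>
    have hq : (1:ℕ) ≤ 2 ^ d := Nat.one_le_two_pow
    rcases le_or_gt (2 ^ (d+1)) s with h | h
    · have h1 : Q (d+1) s ≤ psi (2^d) s := min_le_right _ _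
      have h2 := psi_double hq s (by rw [pow_succ, mul_comm] at h; omega)
      rw [pow_succ, mul_comm (2^d) 2] at *
      omega
    · have h1 : Q (d+1) s ≤ 2 * s - 2 := min_le_left _ _
      rw [psi_of_lt h]
      simp only [z]; omega

lemma psi_sum {β : Type*} {q : ℕ} (hq : 1 ≤ q) (M : Finset β) (f : β → ℕ) :
    ∑ x ∈ M, psi q (f x) ≤ psi q (∑ x ∈ M, f x) := by
  classical
  induction M using Finset.cons_induction with
  | empty => simp [psi_zero]
  | cons a s ha ih =>
    rw [Finset.sum_cons, Finset.sum_cons]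
    calc psi q (f a) + ∑ x ∈ s, psi q (f x)
        ≤ psi q (f a) + psi q (∑ x ∈ s, f x) := by omega
      _ ≤ psi q (f a + ∑ x ∈ s, f x) := psi_super hq _ _ _ rfl

/-- The main arithmetic lemma for the inductive step. -/
lemma AL {β : Type*} (d n : ℕ) (M : Finset β) (f : β → ℕ)
    (h1 : ∀ x ∈ M, 1 ≤ f x) (h2 : ∀ x ∈ M, f x < n)
    (h3 : ∑ x ∈ M, f x ≤ n) :
    ∑ x ∈ M, (1 + Q d (f x)) ≤ Q (d + 1) n := by
  apply le_min
  · -- ≤ 2n - 2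
    have hterm : ∀ x ∈ M, 1 + Q d (f x) ≤ 2 * f x - 1 := by
      intro x hx
      have := Q_le d (f x)
      have := h1 x hx
      omega
    have hsum : ∑ x ∈ M, (1 + Q d (f x)) ≤ ∑ x ∈ M, (2 * f x - 1) :=
      Finset.sum_le_sum hterm
    have hsum2 : ∑ x ∈ M, (2 * f x - 1) + M.card = ∑ x ∈ M, (2 * f x) := by
      rw [Finset.card_eq_sum_ones, ← Finset.sum_add_distrib]
      apply Finset.sum_congr rfl
      intro x hx; have := h1 x hx; omega
    have hsum3 : ∑ x ∈ M, (2 * f x) = 2 * ∑ x ∈ M, f x := by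
      rw [Finset.mul_sum]
    rcases Nat.lt_or_ge M.card 2 with hc | hc
    · interval_cases h : M.card
      · rw [Finset.card_eq_zero.1 h]; simp
      · obtain ⟨x, hx⟩ := Finset.card_eq_one.1 h
        subst hx
        simp only [Finset.sum_singleton]
        have := Q_le d (f x)
        have := h1 x (Finset.mem_singleton_self x)
        have := h2 x (Finset.mem_singleton_self x)
        omega
    · omega
  · -- ≤ psi (2^d) n
    have hq : (1:ℕ) ≤ 2 ^ d := Nat.one_le_two_pow
    have hterm : ∀ x ∈ M, 1 + Q d (f x) ≤ psi (2^d) (f x) := fun x hx =>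
      one_add_Q_le (h1 x hx)
    calc ∑ x ∈ M, (1 + Q d (f x)) ≤ ∑ x ∈ M, psi (2^d) (f x) := Finset.sum_le_sum hterm
      _ ≤ psi (2^d) (∑ x ∈ M, f x) := psi_sum hq M f
      _ ≤ psi (2^d) n := psi_mono hq h3

/-- A laminar family of nonempty proper subsets of `S` whose strict chains have
length at most `d` has cardinality at most `Q d S.card`. -/
lemma laminar_card {α : Type*} [DecidableEq α] :
    ∀ (d : ℕ) (S : Finset α) (F : Finset (Finset α)),
    (∀ A ∈ F, A ⊂ S) → (∀ A ∈ F, A.Nonempty) →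
    (∀ A ∈ F, ∀ B ∈ F, A ⊆ B ∨ B ⊆ A ∨ Disjoint A B) →
    (∀ l : List (Finset α), l.Chain' (· ⊂ ·) → (∀ A ∈ l, A ∈ F) → l.length ≤ d) →
    F.card ≤ Q d S.card := by
  intro d
  induction d with
  | zero =>
    intro S F _ _ _ hchain
    have : F = ∅ := by
      rw [Finset.eq_empty_iff_forall_notMem]
      intro A hA
      have := hchain [A] (List.isChain_singleton A) (by simpa using hA)
      simp at this
    simp [this, Q]
  | succ d ih =>
    intro S F hprop hne hlam hchain
    classical
    -- maximal elements
    set Mx : Finset (Finset α) := F.filter (fun A => ∀ B ∈ F, ¬ A ⊂ B) with hMx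
    have hmax : ∀ A ∈ F, ∃ M ∈ Mx, A ⊆ M := by
      intro A hA
      obtain ⟨B, hB, hBmax⟩ := Finset.exists_max_image (F.filter (fun C => A ⊆ C))
        Finset.card (⟨A, by simp [hA]⟩)
      rw [Finset.mem_filter] at hB
      refine ⟨B, ?_, hB.2⟩
      rw [hMx, Finset.mem_filter]
      refine ⟨hB.1, fun C hC hBC => ?_⟩
      have hAC : A ⊆ C := hB.2.trans hBC.subset
      have := hBmax C (by simp [hC, hAC])
      exact absurd (Finset.card_lt_card hBC) (by omega)
    have hcover : F ⊆ Mx.biUnion (fun M => F.filter (· ⊆ M)) := by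
      intro A hA
      obtain ⟨M, hM, hAM⟩ := hmax A hA
      exact Finset.mem_biUnion.2 ⟨M, hM, by simp [hA, hAM]⟩
    have hMxF : ∀ M ∈ Mx, M ∈ F := fun M hM => (Finset.mem_filter.1 hM).1
    -- pairwise disjoint maximal elements
    have hdisj : ∀ M1 ∈ Mx, ∀ M2 ∈ Mx, M1 ≠ M2 → Disjoint M1 M2 := by
      intro M1 h1 M2 h2 hne12
      rcases hlam M1 (hMxF _ h1) M2 (hMxF _ h2) with h | h | h
      · exact absurd (Finset.ssubset_iff_subset_ne.2 ⟨h, hne12⟩)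
          ((Finset.mem_filter.1 h1).2 M2 (hMxF _ h2))
      · exact absurd (Finset.ssubset_iff_subset_ne.2 ⟨h, hne12.symm⟩)
          ((Finset.mem_filter.1 h2).2 M1 (hMxF _ h1))
      · exact h
    have hcard1 : F.card ≤ ∑ M ∈ Mx, (F.filter (· ⊆ M)).card :=
      le_trans (Finset.card_le_card hcover) Finset.card_biUnion_le
    -- each slice
    have hslice : ∀ M ∈ Mx, (F.filter (· ⊆ M)).card ≤ 1 + Q d M.card := by
      intro M hM
      have hsub : F.filter (· ⊆ M) ⊆ insert M (F.filter (· ⊂ M)) := by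
        intro A hA
        rw [Finset.mem_filter] at hA
        rcases eq_or_ne A M with rfl | hAne
        · exact Finset.mem_insert_self _ _
        · exact Finset.mem_insert_of_mem (by
            rw [Finset.mem_filter]
            exact ⟨hA.1, Finset.ssubset_iff_subset_ne.2 ⟨hA.2, hAne⟩⟩)
      have h2 : (F.filter (· ⊂ M)).card ≤ Q d M.card := by
        apply ih M (F.filter (· ⊂ M))
        · intro A hA; exact (Finset.mem_filter.1 hA).2
        · intro A hA; exact hne A (Finset.mem_filter.1 hA).1
        · intro A hA B hB
          exact hlam A (Finset.mem_filter.1 hA).1 B (Finset.mem_filter.1 hB).1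
        · intro l hl hlF
          have hch : (l ++ [M]).Chain' (· ⊂ ·) := by
            rw [show (l ++ [M]).Chain' (· ⊂ ·) = (l ++ [M]).IsChain (· ⊂ ·) from rfl, List.isChain_append]
            refine ⟨hl, List.isChain_singleton M, ?_⟩
            intro x hx y hy
            simp only [List.head?_cons, Option.mem_def, Option.some.injEq] at hy
            subst hy
            have hxl : x ∈ l := List.mem_of_mem_getLast? hx
            exact (Finset.mem_filter.1 (hlF x hxl)).2
          have := hchain (l ++ [M]) hch (by
            intro A hA
            rcases List.mem_append.1 hA with h | h
            · exact (Finset.mem_filter.1 (hlF A h)).1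
            · simp only [List.mem_singleton] at h; rw [h]; exact hMxF M hM)
          simp at this
          omega
      calc (F.filter (· ⊆ M)).card ≤ (insert M (F.filter (· ⊂ M))).card :=
            Finset.card_le_card hsub
        _ ≤ 1 + (F.filter (· ⊂ M)).card := by
            have := Finset.card_insert_le M (F.filter (· ⊂ M)); omega
        _ ≤ 1 + Q d M.card := by omega
    -- sum bound
    have hsum : ∑ M ∈ Mx, (F.filter (· ⊆ M)).card ≤ ∑ M ∈ Mx, (1 + Q d M.card) :=
      Finset.sum_le_sum hslice
    have hQ : ∑ M ∈ Mx, (1 + Q d M.card) ≤ Q (d+1) S.card := by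
      apply AL d S.card Mx Finset.card
      · intro M hM; exact Finset.card_pos.2 (hne M (hMxF M hM))
      · intro M hM; exact Finset.card_lt_card (hprop M (hMxF M hM))
      · calc ∑ M ∈ Mx, M.card = (Mx.biUnion id).card := (Finset.card_biUnion hdisj).symm
          _ ≤ S.card := Finset.card_le_card (by
              intro x hx
              obtain ⟨M, hM, hxM⟩ := Finset.mem_biUnion.1 hx
              exact (hprop M (hMxF M hM)).subset hxM)
    omega

lemma ils_getElem_mem_seg {V : Type*} [DecidableEq V] {l : List V} {u w : V} {j : ℕ}
    (h1 : min (l.idxOf u) (l.idxOf w) ≤ j)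
    (h2 : j ≤ max (l.idxOf u) (l.idxOf w)) (h3 : j < l.length) :
    l[j] ∈ seg l u w := by
  unfold seg
  set a := min (l.idxOf u) (l.idxOf w) with ha
  set t := max (l.idxOf u) (l.idxOf w) - a + 1 with ht
  have hlen : (( l.drop a).take t).length = min t (l.length - a) := by
    simp [List.length_take, List.length_drop]
  rw [List.mem_iff_getElem]
  refine ⟨j - a, ?_, ?_⟩
  · rw [hlen]; omega
  · rw [List.getElem_take, List.getElem_drop]
    congr 1; omega

lemma ils_mem_of_mem_seg {V : Type*} [DecidableEq V] {l : List V} {u w x : V}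
    (h : x ∈ seg l u w) : x ∈ l :=
  List.drop_subset _ _ (List.take_subset _ _ h)

section Struct
variable {V : Type*} [Fintype V] [DecidableEq V] {m : ℕ} (p : Fin m → List V) (r : V)

lemma ils_mem_encoding {v : V} {i : Fin m} : i ∈ encoding p v ↔ v ∈ p i := by
  simp [encoding]

lemma ils_r_mem (hlast : ∀ i, (p i).getLast? = some r) (i : Fin m) : r ∈ p i := by
  obtain ⟨hne, heq⟩ := List.mem_getLast?_eq_getLast (l := p i) (x := r) (by simp [hlast i])
  exact heq ▸ List.getLast_mem hne

lemma ils_indexOf_r (hnodup : ∀ i, (p i).Nodup)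
    (hlast : ∀ i, (p i).getLast? = some r) (i : Fin m) :
    (p i).idxOf r = (p i).length - 1 := by
  obtain ⟨hne, heq⟩ := List.mem_getLast?_eq_getLast (l := p i) (x := r) (by simp [hlast i])
  have h0 : 0 < (p i).length := List.length_pos_iff.2 hne
  have h2 : r ∈ p i := ils_r_mem p r hlast i
  have h3 : (p i).idxOf r < (p i).length := List.idxOf_lt_length_iff.2 h2
  have h4 : (p i)[(p i).idxOf r] = (p i)[(p i).length - 1]'(by omega) := by
    rw [List.getElem_idxOf, heq, ← List.getLast_eq_getElem]
  exact ((hnodup i).getElem_inj_iff).1 h4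

lemma ils_enc_mono (hnodup : ∀ i, (p i).Nodup) (hcons : Consistent p)
    (hlast : ∀ i, (p i).getLast? = some r) (i : Fin m) {v w : V}
    (hv : v ∈ p i) (hw : w ∈ p i)
    (hvw : (p i).idxOf v ≤ (p i).idxOf w) :
    encoding p v ⊆ encoding p w := by
  intro k hk
  have hvk : v ∈ p k := (ils_mem_encoding p).1 hk
  have hri : r ∈ p i := ils_r_mem p r hlast i
  have hrk : r ∈ p k := ils_r_mem p r hlast k
  have hwlt : (p i).idxOf w < (p i).length := List.idxOf_lt_length_iff.2 hw
  have hir : (p i).idxOf r = (p i).length - 1 := ils_indexOf_r p r hnodup hlast i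
  have hwseg : w ∈ seg (p i) v r := by
    have := ils_getElem_mem_seg (l := p i) (u := v) (w := r) (j := (p i).idxOf w)
      (by omega) (by omega) hwlt
    rwa [List.getElem_idxOf] at this
  have hcons' := hcons i k v r hv hri hvk hrk
  have hwk : w ∈ seg (p k) v r := by
    rcases hcons' with h | h
    · rwa [h] at hwseg
    · rw [h] at hwseg; exact List.mem_reverse.1 hwseg
  exact (ils_mem_encoding p).2 (ils_mem_of_mem_seg hwk)

lemma ils_enc_laminar (hnodup : ∀ i, (p i).Nodup) (hcons : Consistent p)
    (hlast : ∀ i, (p i).getLast? = some r) (v w : V) :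
    encoding p v ⊆ encoding p w ∨ encoding p w ⊆ encoding p v ∨
      Disjoint (encoding p v) (encoding p w) := by
  by_cases hd : Disjoint (encoding p v) (encoding p w)
  · exact Or.inr (Or.inr hd)
  · obtain ⟨i, hiv, hiw⟩ := Finset.not_disjoint_iff.1 hd
    have hv : v ∈ p i := (ils_mem_encoding p).1 hiv
    have hw : w ∈ p i := (ils_mem_encoding p).1 hiw
    rcases le_total ((p i).idxOf v) ((p i).idxOf w) with h | h
    · exact Or.inl (ils_enc_mono p r hnodup hcons hlast i hv hw h)
    · exact Or.inr (Or.inl (ils_enc_mono p r hnodup hcons hlast i hw hv h))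

lemma ils_encoding_r (hlast : ∀ i, (p i).getLast? = some r) :
    encoding p r = Finset.univ := by
  apply Finset.eq_univ_iff_forall.2
  intro i
  exact (ils_mem_encoding p).2 (ils_r_mem p r hlast i)

end Struct


-- MAIN structural bound
lemma ils_main {V : Type*} [Fintype V] [DecidableEq V]
    {m : ℕ} (p : Fin m → List V) (r : V) (dmax : ℕ)
    (hnodup : ∀ i, (p i).Nodup) (hcons : Consistent p)
    (hlast : ∀ i, (p i).getLast? = some r) (hlen : ∀ i, (p i).length ≤ dmax) :
    {v : V | Identifiable p v}.ncard ≤ 1 + Q (dmax - 1) m := by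
  classical
  set I : Finset V := Finset.univ.filter (fun v => Identifiable p v) with hI
  have hIset : {v : V | Identifiable p v} = ↑I := by
    ext v; simp [hI]
  have hmemI : ∀ v, v ∈ I ↔ Identifiable p v := by intro v; simp [hI]
  set F : Finset (Finset (Fin m)) := I.image (encoding p) with hF
  have hFcard : F.card = I.card := by
    apply Finset.card_image_of_injOn
    intro v hv w hw hvw
    by_contra hne
    exact ((hmemI w).1 hw).2 v hne hvw
  set F' : Finset (Finset (Fin m)) := F.erase Finset.univ with hF'
  have hCF : F.card ≤ 1 + F'.card := by
    have : F ⊆ insert Finset.univ F' := by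
      intro A hA
      rcases eq_or_ne A Finset.univ with rfl | h
      · exact Finset.mem_insert_self _ _
      · exact Finset.mem_insert_of_mem (Finset.mem_erase.2 ⟨h, hA⟩)
    have h2 := Finset.card_insert_le (Finset.univ : Finset (Fin m)) F'
    have := Finset.card_le_card this
    omega
  have hmemF : ∀ A ∈ F, ∃ v, Identifiable p v ∧ encoding p v = A := by
    intro A hA
    obtain ⟨v, hv, he⟩ := Finset.mem_image.1 hA
    exact ⟨v, (hmemI v).1 hv, he⟩
  -- the choice function
  set f : Finset (Fin m) → V := fun B =>
    if h : ∃ v, Identifiable p v ∧ encoding p v = B then h.choose else r with hf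
  have hfspec : ∀ B ∈ F, Identifiable p (f B) ∧ encoding p (f B) = B := by
    intro B hB
    have h := hmemF B hB
    simp only [hf, dif_pos h]
    exact h.choose_spec
  have hQ : F'.card ≤ Q (dmax - 1) m := by
    have := laminar_card (dmax - 1) (Finset.univ : Finset (Fin m)) F' ?_ ?_ ?_ ?_
    · simpa using this
    · -- proper
      intro A hA
      rw [Finset.ssubset_iff_subset_ne]
      exact ⟨Finset.subset_univ A, (Finset.mem_erase.1 hA).1⟩
    · -- nonempty
      intro A hA
      obtain ⟨v, hv, he⟩ := hmemF A (Finset.mem_of_mem_erase hA)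
      rw [← he]
      exact Finset.nonempty_iff_ne_empty.2 hv.1
    · -- laminar
      intro A hA B hB
      obtain ⟨v, _, hev⟩ := hmemF A (Finset.mem_of_mem_erase hA)
      obtain ⟨w, _, hew⟩ := hmemF B (Finset.mem_of_mem_erase hB)
      rw [← hev, ← hew]
      exact ils_enc_laminar p r hnodup hcons hlast v w
    · -- chain bound
      intro l hl hlF
      cases l with
      | nil => simp
      | cons A t =>
        have hpair : (A :: t).Pairwise (· ⊂ ·) := List.isChain_iff_pairwise.1 hl
        have hnodupl : (A :: t).Nodup := hpair.imp (fun h => ne_of_lt h)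
        have hAF' : A ∈ F' := hlF A List.mem_cons_self
        have hAF : A ∈ F := Finset.mem_of_mem_erase hAF'
        obtain ⟨v0, hv0, hev0⟩ := hmemF A hAF
        obtain ⟨i, hi⟩ : A.Nonempty := by
          rw [← hev0]; exact Finset.nonempty_iff_ne_empty.2 hv0.1
        have hall : ∀ B ∈ (A :: t), i ∈ B := by
          intro B hB
          rcases List.mem_cons.1 hB with rfl | hB
          · exact hi
          · exact ((List.pairwise_cons.1 hpair).1 B hB).subset hi
        set T : Finset V := ((A :: t).toFinset).image f with hT
        have hsubF : ∀ B ∈ (A :: t).toFinset, B ∈ F := by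
          intro B hB
          exact Finset.mem_of_mem_erase (hlF B (List.mem_toFinset.1 hB))
        have hTcard : T.card = (A :: t).length := by
          rw [hT, Finset.card_image_of_injOn, List.toFinset_card_of_nodup hnodupl]
          intro B1 h1 B2 h2 h12
          have e1 := (hfspec B1 (hsubF B1 h1)).2
          have e2 := (hfspec B2 (hsubF B2 h2)).2
          rw [← e1, ← e2, h12]
        have hTsub : T ⊆ (p i).toFinset := by
          intro x hx
          obtain ⟨B, hB, rfl⟩ := Finset.mem_image.1 hx
          have he := (hfspec B (hsubF B hB)).2
          have : i ∈ encoding p (f B) := by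
            rw [he]; exact hall B (List.mem_toFinset.1 hB)
          exact List.mem_toFinset.2 ((ils_mem_encoding p).1 this)
        have hrT : r ∉ T := by
          intro hr
          obtain ⟨B, hB, hBr⟩ := Finset.mem_image.1 hr
          have he := (hfspec B (hsubF B hB)).2
          have hBuniv : B = Finset.univ := by
            rw [← he, hBr]; exact ils_encoding_r p r hlast
          exact (Finset.mem_erase.1 (hlF B (List.mem_toFinset.1 hB))).1 hBuniv
        have hins : insert r T ⊆ (p i).toFinset := by
          intro x hx
          rcases Finset.mem_insert.1 hx with hx0 | hx
          · rw [hx0]; exact List.mem_toFinset.2 (ils_r_mem p r hlast i)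
          · exact hTsub hx
        have hc1 : (insert r T).card = T.card + 1 := Finset.card_insert_of_notMem hrT
        have hc2 : (p i).toFinset.card = (p i).length := List.toFinset_card_of_nodup (hnodup i)
        have hc3 := Finset.card_le_card hins
        have hc4 := hlen i
        have hc5 : 1 ≤ (p i).length := List.length_pos_iff.2 (by
          intro h; have := hlast i; rw [h] at this; simp at this)
        omega
  rw [hIset, Set.ncard_coe_finset]
  omega

/-- Identifiability for single-server monitoring (Theorem V.4): for `m` consistent
monitoring paths with common final node `r`, each of length at most `d_max`,
on `n` nodes:
* if `d_max ≥ ⌈log₂ m⌉ + 1` the number of identifiable nodes is at most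
  `min (2m − 1) n`;
* if `2 ≤ d_max < ⌈log₂ m⌉ + 1` it is at most
  `min n (1 + ⌊m / 2^(d_max−2)⌋·z(2^(d_max−2)) + z(m mod 2^(d_max−2)))`. -/
theorem identifiable_le_single_server {V : Type*} [Fintype V] [DecidableEq V]
    {m : ℕ} (p : Fin m → List V) (r : V) (dmax : ℕ)
    (hnodup : ∀ i, (p i).Nodup) (hcons : Consistent p)
    (hlast : ∀ i, (p i).getLast? = some r) (hlen : ∀ i, (p i).length ≤ dmax) :
    (Nat.clog 2 m + 1 ≤ dmax →
      {v : V | Identifiable p v}.ncard ≤ min (z m) (Fintype.card V)) ∧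
    (2 ≤ dmax → dmax < Nat.clog 2 m + 1 →
      {v : V | Identifiable p v}.ncard ≤
        min (Fintype.card V)
          (1 + (m / 2 ^ (dmax - 2)) * z (2 ^ (dmax - 2)) + z (m % 2 ^ (dmax - 2)))) := by
  classical
  have hmain := ils_main p r dmax hnodup hcons hlast hlen
  have hcardV : {v : V | Identifiable p v}.ncard ≤ Fintype.card V := by
    calc {v : V | Identifiable p v}.ncard ≤ (Set.univ : Set V).ncard :=
          Set.ncard_le_ncard (Set.subset_univ _) Set.finite_univ
      _ = Fintype.card V := by rw [Set.ncard_univ, Nat.card_eq_fintype_card]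
  constructor
  · intro _
    apply le_min _ hcardV
    rcases Nat.eq_zero_or_pos m with rfl | hm
    · have hempty : {v : V | Identifiable p v} = ∅ := by
        ext v
        simp only [Set.mem_setOf_eq, Set.mem_empty_iff_false, iff_false]
        intro hv
        exact hv.1 (Finset.eq_empty_of_isEmpty _)
      rw [hempty, Set.ncard_empty]
      exact Nat.zero_le _
    · have := Q_le (dmax - 1) m
      simp only [z]
      omega
  · intro h2 _
    apply le_min hcardV
    have hd : dmax - 1 = (dmax - 2) + 1 := by omega
    have hQle : Q (dmax - 1) m ≤ psi (2 ^ (dmax - 2)) m := by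
      rw [hd]; exact min_le_right _ _
    have : psi (2 ^ (dmax - 2)) m =
        (m / 2 ^ (dmax - 2)) * z (2 ^ (dmax - 2)) + z (m % 2 ^ (dmax - 2)) := rfl
    omega
end

section
/- Let P = (p_1, …, p_m) be a consistent set of monitoring paths all having the same final node r (so the paths form a tree rooted at r). Then for each path p_i, the number of identifiable nodes appearing on p_i is at most m. -/
/-- Membership in a segment: any node of `l` whose index lies between the indices
of `u` and `w` belongs to `seg l u w`. -/
lemma mem_seg_of_index {V : Type*} [DecidableEq V] {l : List V} {u w x : V}
    (hx : x ∈ l) (h1 : min (l.idxOf u) (l.idxOf w) ≤ l.idxOf x)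
    (h2 : l.idxOf x ≤ max (l.idxOf u) (l.idxOf w)) : x ∈ seg l u w := by
  set a := min (l.idxOf u) (l.idxOf w) with ha
  set b := max (l.idxOf u) (l.idxOf w) with hb
  have hget : ((l.drop a).take (b - a + 1))[l.idxOf x - a]? = some x := by
    rw [List.getElem?_take, if_pos (by omega), List.getElem?_drop]
    have : a + (l.idxOf x - a) = l.idxOf x := by omega
    rw [this]
    exact List.getElem?_idxOf hx
  exact List.mem_of_getElem? hget

/-- Monotonicity of encodings along a path toward the common root. -/
lemma encoding_subset {V : Type*} [DecidableEq V] {m : ℕ}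
    (p : Fin m → List V) (r : V) (hnodup : ∀ i, (p i).Nodup)
    (hcons : Consistent p) (hlast : ∀ i, (p i).getLast? = some r) (i : Fin m)
    {v w : V} (hv : v ∈ p i) (hw : w ∈ p i)
    (hle : (p i).idxOf v ≤ (p i).idxOf w) :
    encoding p v ⊆ encoding p w := by
  intro j hj
  simp only [encoding, Finset.mem_filter, Finset.mem_univ, true_and] at hj ⊢
  -- r is the last element of every path
  have hrmem : ∀ k, r ∈ p k := by
    intro k
    rcases List.mem_getLast?_eq_getLast (hlast k) with ⟨hne, heq⟩
    exact heq ▸ List.getLast_mem hne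
  -- indexOf r in p i is length - 1
  have hne : p i ≠ [] := by
    intro h; have := hlast i; rw [h] at this; simp at this
  have hri : (p i).idxOf r = (p i).length - 1 := by
    rcases List.mem_getLast?_eq_getLast (hlast i) with ⟨hne', heq⟩
    have hlt : (p i).length - 1 < (p i).length := by
      have := List.length_pos_iff.2 hne'; omega
    have : (p i)[(p i).length - 1] = r := by
      rw [← List.getLast_eq_getElem]; exact heq.symm
    rw [← this]
    exact (hnodup i).idxOf_getElem _ hlt
  have hwlt : (p i).idxOf w < (p i).length := List.idxOf_lt_length_iff.2 hw
  have hwr : (p i).idxOf w ≤ (p i).idxOf r := by omega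
  have hvr : (p i).idxOf v ≤ (p i).idxOf r := le_trans hle hwr
  -- w lies on seg (p i) v r
  have hwseg : w ∈ seg (p i) v r := by
    apply mem_seg_of_index hw
    · exact le_trans (min_le_left _ _) hle
    · exact le_trans hwr (le_max_right _ _)
  -- use consistency between p i and p j on the pair (v, r)
  rcases hcons i j v r hv (hrmem i) hj (hrmem j) with h | h
  · have : w ∈ seg (p j) v r := h ▸ hwseg
    exact List.mem_of_mem_drop (List.mem_of_mem_take this)
  · have : w ∈ (seg (p j) v r).reverse := h ▸ hwseg
    rw [List.mem_reverse] at this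
    exact List.mem_of_mem_drop (List.mem_of_mem_take this)

/-- Lemma V.7: if the `m` consistent monitoring paths share a common final node `r`
(so that they form a tree rooted at `r`), then each path contains at most `m`
identifiable nodes. -/
theorem identifiable_on_path_le_m {V : Type*} [DecidableEq V] {m : ℕ}
    (p : Fin m → List V) (r : V) (hnodup : ∀ i, (p i).Nodup)
    (hcons : Consistent p) (hlast : ∀ i, (p i).getLast? = some r) (i : Fin m) :
    {v : V | v ∈ p i ∧ Identifiable p v}.ncard ≤ m := by
  classical
  set S : Set V := {v : V | v ∈ p i ∧ Identifiable p v}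
  have key : S.ncard ≤ (Set.Icc 1 m : Set ℕ).ncard := by
    apply Set.ncard_le_ncard_of_injOn (fun v => (encoding p v).card)
    · rintro v ⟨hvi, hvne, _⟩
      constructor
      · have : (encoding p v).Nonempty := Finset.nonempty_iff_ne_empty.2 hvne
        exact Finset.card_pos.2 this
      · calc (encoding p v).card ≤ (Finset.univ : Finset (Fin m)).card :=
              Finset.card_le_card (Finset.subset_univ _)
          _ = m := by simp
    · rintro v ⟨hvi, _, hvid⟩ w ⟨hwi, _, hwid⟩ hcard
      by_contra hne
      have heq : encoding p v = encoding p w := by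
        rcases le_total ((p i).idxOf v) ((p i).idxOf w) with h | h
        · exact Finset.eq_of_subset_of_card_le
            (encoding_subset p r hnodup hcons hlast i hvi hwi h) (le_of_eq hcard.symm)
        · exact (Finset.eq_of_subset_of_card_le
            (encoding_subset p r hnodup hcons hlast i hwi hvi h) (le_of_eq hcard)).symm
      exact hvid w (fun h => hne h.symm) heq.symm
  have : (Set.Icc 1 m : Set ℕ).ncard = m := by
    rw [← Finset.coe_Icc, Set.ncard_coe_finset, Nat.card_Icc]; omega
  omega
end

section
/- Let P = (p_1, …, p_m) be a consistent set of monitoring paths all having the same final node r (so the paths form a tree rooted at r). For each k let ℓ_k be the number of identifiable nodes appearing on path p_k. Then Σ_{k=1}^{m} ℓ_k ≤ (m² + 3m − 2)/2. -/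
/-- The key combinatorial bound: a laminar family `F` of distinct nonempty subsets of a
ground set `U` of size `n` satisfies `2 * Σ_{S ∈ F} |S| + 2 ≤ n² + 3n`. -/
lemma laminar_aux {α : Type*} [DecidableEq α] :
    ∀ n : ℕ, ∀ (U : Finset α) (F : Finset (Finset α)), U.card = n →
      (∀ S ∈ F, S ⊆ U) → (∀ S ∈ F, S.Nonempty) →
      (∀ S ∈ F, ∀ T ∈ F, S ⊆ T ∨ T ⊆ S ∨ Disjoint S T) →
      F.Nonempty → 2 * (∑ S ∈ F, S.card) + 2 ≤ n ^ 2 + 3 * n := by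
  intro n
  induction n using Nat.strong_induction_on with
  | _ n IH =>
    intro U F hUn hsub hne hlam hF
    classical
    set G : Finset (Finset α) := F.erase U with hG
    have hsumF : ∑ S ∈ F, S.card ≤ n + ∑ S ∈ G, S.card := by
      by_cases hUF : U ∈ F
      · rw [hG, ← Finset.sum_erase_add F _ hUF, hUn]; omega
      · rw [hG, Finset.erase_eq_of_notMem hUF]; omega
    have hn1 : 1 ≤ n := by
      obtain ⟨S, hS⟩ := hF
      have h1 := Finset.card_le_card (hsub S hS)
      have h2 := (hne S hS).card_pos
      omega
    have claim : G = ∅ ∨ 2 * (∑ S ∈ G, S.card) + 2 ≤ n ^ 2 + n := by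
      rcases eq_or_ne G ∅ with h | h
      · exact Or.inl h
      right
      have hGne : G.Nonempty := Finset.nonempty_iff_ne_empty.2 h
      obtain ⟨M, hMG, hMmax⟩ := G.exists_maximal hGne
      have hMF : M ∈ F := Finset.mem_of_mem_erase hMG
      have hMU : M ⊆ U := hsub M hMF
      have hMneU : M ≠ U := Finset.ne_of_mem_erase hMG
      set a := M.card with ha
      have ha1 : 1 ≤ a := (hne M hMF).card_pos
      have haltn : a < n := by
        rw [← hUn]; exact Finset.card_lt_card (hMU.ssubset_of_ne hMneU)
      set A : Finset (Finset α) := G.filter (fun S => S ⊆ M) with hA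
      set B : Finset (Finset α) := G.filter (fun S => ¬ S ⊆ M) with hB
      have hsplit : ∑ S ∈ A, S.card + ∑ S ∈ B, S.card = ∑ S ∈ G, S.card :=
        Finset.sum_filter_add_sum_filter_not G _ _
      have hBsub : ∀ S ∈ B, S ⊆ U \ M := by
        intro S hSB
        rw [hB, Finset.mem_filter] at hSB
        obtain ⟨hSG, hSnM⟩ := hSB
        have hSF : S ∈ F := Finset.mem_of_mem_erase hSG
        rcases hlam S hSF M hMF with h1 | h1 | h1
        · exact absurd h1 hSnM
        · exfalso
          have hMneS : M ≠ S := fun hEq => hSnM (hEq ▸ Finset.Subset.refl M)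
          exact hSnM (hMmax hSG h1)
        · exact Finset.subset_sdiff.2 ⟨hsub S hSF, h1⟩
      have hAne : A.Nonempty :=
        ⟨M, by rw [hA, Finset.mem_filter]; exact ⟨hMG, Finset.Subset.refl M⟩⟩
      have hbA : 2 * (∑ S ∈ A, S.card) + 2 ≤ a ^ 2 + 3 * a := by
        refine IH a haltn M A rfl ?_ ?_ ?_ hAne
        · intro S hS; exact (Finset.mem_filter.1 hS).2
        · intro S hS; exact hne S (Finset.mem_of_mem_erase (Finset.mem_filter.1 hS).1)
        · intro S hS T hT
          exact hlam S (Finset.mem_of_mem_erase (Finset.mem_filter.1 hS).1)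
            T (Finset.mem_of_mem_erase (Finset.mem_filter.1 hT).1)
      set b := (U \ M).card with hb
      have hab : a + b = n := by
        rw [hb, Finset.card_sdiff_of_subset hMU, hUn]; omega
      rcases eq_or_ne B ∅ with hBe | hBne
      · rw [hBe, Finset.sum_empty] at hsplit
        rw [← hsplit]
        nlinarith
      · have hBne' : B.Nonempty := Finset.nonempty_iff_ne_empty.2 hBne
        have hb1 : 1 ≤ b := by
          obtain ⟨S, hSB⟩ := hBne'
          have := Finset.card_le_card (hBsub S hSB)
          have := (hne S (Finset.mem_of_mem_erase (Finset.mem_filter.1 hSB).1)).card_pos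
          omega
        have hbltn : b < n := by omega
        have hbB : 2 * (∑ S ∈ B, S.card) + 2 ≤ b ^ 2 + 3 * b := by
          refine IH b hbltn (U \ M) B rfl hBsub ?_ ?_ hBne'
          · intro S hS; exact hne S (Finset.mem_of_mem_erase (Finset.mem_filter.1 hS).1)
          · intro S hS T hT
            exact hlam S (Finset.mem_of_mem_erase (Finset.mem_filter.1 hS).1)
              T (Finset.mem_of_mem_erase (Finset.mem_filter.1 hT).1)
        have key : a + b ≤ a * b + 1 := by nlinarith
        rw [← hsplit]
        nlinarith
    rcases claim with h | h
    · rw [h, Finset.sum_empty] at hsumF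
      nlinarith
    · nlinarith

lemma indexOf_last {V : Type*} [DecidableEq V] {l : List V} {r : V}
    (hnd : l.Nodup) (hr : l.getLast? = some r) :
    l.idxOf r = l.length - 1 ∧ r ∈ l ∧ l ≠ [] := by
  have hne : l ≠ [] := by rintro rfl; simp at hr
  have hrl : l.getLast hne = r := by
    have := List.getLast?_eq_getLast hne
    rw [hr] at this; exact (Option.some.inj this).symm
  have hlen : 0 < l.length := List.length_pos_iff.2 hne
  have hget : l[l.length - 1] = r := by rw [← List.getLast_eq_getElem hne, hrl]
  have hrmem : r ∈ l := hget ▸ List.getElem_mem _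
  have hir : l.idxOf r < l.length := List.idxOf_lt_length_iff.2 hrmem
  have hgi : l[l.idxOf r] = r := List.getElem_idxOf hir
  have : l.idxOf r = l.length - 1 :=
    (hnd.getElem_inj_iff).1 (by rw [hgi, hget] : l[l.idxOf r] = l[l.length - 1]'(by omega))
  exact ⟨this, hrmem, hne⟩

lemma seg_last {V : Type*} [DecidableEq V] {l : List V} {r u : V}
    (hnd : l.Nodup) (hr : l.getLast? = some r) (hu : u ∈ l) :
    seg l u r = l.drop (l.idxOf u) := by
  obtain ⟨hir, hrmem, hne⟩ := indexOf_last hnd hr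
  have hiu : l.idxOf u < l.length := List.idxOf_lt_length_iff.2 hu
  have h1 : l.idxOf u ≤ l.idxOf r := by omega
  rw [seg, min_eq_left h1, max_eq_right h1]
  apply List.take_of_length_le
  rw [List.length_drop]
  omega

/-- In a consistent rooted family, the suffix of a path after a node `u` is independent
of the path. -/
lemma suffix_eq {V : Type*} [DecidableEq V] {m : ℕ} {p : Fin m → List V} {r : V}
    (hnodup : ∀ i, (p i).Nodup) (hcons : Consistent p)
    (hlast : ∀ i, (p i).getLast? = some r) {i j : Fin m} {u : V}
    (hui : u ∈ p i) (huj : u ∈ p j) :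
    (p i).drop ((p i).idxOf u) = (p j).drop ((p j).idxOf u) := by
  obtain ⟨hiri, hrmi, hnei⟩ := indexOf_last (hnodup i) (hlast i)
  obtain ⟨hirj, hrmj, hnej⟩ := indexOf_last (hnodup j) (hlast j)
  have h := hcons i j u r hui hrmi huj hrmj
  rw [seg_last (hnodup i) (hlast i) hui, seg_last (hnodup j) (hlast j) huj] at h
  rcases h with h | h
  · exact h
  · have hiu : (p i).idxOf u < (p i).length := List.idxOf_lt_length_iff.2 hui
    have hiuj : (p j).idxOf u < (p j).length := List.idxOf_lt_length_iff.2 huj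
    have hheadi : ((p i).drop ((p i).idxOf u)).head? = some u := by
      rw [List.head?_drop, List.getElem?_eq_getElem hiu, List.getElem_idxOf hiu]
    have hlastj : ((p j).drop ((p j).idxOf u)).getLast? = some r := by
      rw [List.getLast?_drop, if_neg (by omega), hlast j]
    have hur : u = r := by
      rw [h, List.head?_reverse, hlastj] at hheadi
      exact (Option.some.inj hheadi).symm
    subst hur
    have hlenj : ((p j).drop ((p j).idxOf u)).length = 1 := by
      rw [List.length_drop, hirj]
      have := List.length_pos_iff.2 hnej
      omega
    obtain ⟨x, hx⟩ := List.length_eq_one_iff.1 hlenj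
    rw [hx] at h ⊢
    simpa using h

/-- Encodings form a laminar family. -/
lemma enc_laminar {V : Type*} [DecidableEq V] {m : ℕ} {p : Fin m → List V} {r : V}
    (hnodup : ∀ i, (p i).Nodup) (hcons : Consistent p)
    (hlast : ∀ i, (p i).getLast? = some r) (v w : V) :
    encoding p v ⊆ encoding p w ∨ encoding p w ⊆ encoding p v ∨
      Disjoint (encoding p v) (encoding p w) := by
  classical
  by_cases hd : Disjoint (encoding p v) (encoding p w)
  · exact Or.inr (Or.inr hd)
  obtain ⟨i, hiv, hiw⟩ := Finset.not_disjoint_iff.1 hd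
  have hvi : v ∈ p i := (Finset.mem_filter.1 hiv).2
  have hwi : w ∈ p i := (Finset.mem_filter.1 hiw).2
  have key : ∀ x y : V, x ∈ p i → y ∈ p i →
      (p i).idxOf x ≤ (p i).idxOf y →
      encoding p x ⊆ encoding p y := by
    intro x y hx hy hle k hk
    have hxk : x ∈ p k := (Finset.mem_filter.1 hk).2
    have hiy : (p i).idxOf y < (p i).length := List.idxOf_lt_length_iff.2 hy
    have hix : (p i).idxOf x < (p i).length := List.idxOf_lt_length_iff.2 hx
    have hymem : y ∈ (p i).drop ((p i).idxOf x) := by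
      have hjlt : (p i).idxOf y - (p i).idxOf x <
          ((p i).drop ((p i).idxOf x)).length := by
        rw [List.length_drop]; omega
      have : ((p i).drop ((p i).idxOf x))[(p i).idxOf y - (p i).idxOf x] = y := by
        rw [List.getElem_drop]
        simp only [Nat.add_sub_cancel' hle]
        exact List.getElem_idxOf hiy
      exact this ▸ List.getElem_mem _
    rw [suffix_eq hnodup hcons hlast hx hxk] at hymem
    have : y ∈ p k := (List.drop_sublist _ _).subset hymem
    exact Finset.mem_filter.2 ⟨Finset.mem_univ k, this⟩
  rcases le_total ((p i).idxOf v) ((p i).idxOf w) with hle | hle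
  · exact Or.inl (key v w hvi hwi hle)
  · exact Or.inr (Or.inl (key w v hwi hvi hle))

/-- Lemma V.8: if the `m` consistent monitoring paths share a common final node `r`
(forming a tree rooted at `r`), and `ℓ_k` is the number of identifiable nodes on
path `p k`, then `Σ_k ℓ_k ≤ (m² + 3m − 2) / 2`. -/
theorem sum_identifiable_on_paths_le {V : Type*} [DecidableEq V] {m : ℕ}
    (p : Fin m → List V) (r : V) (hnodup : ∀ i, (p i).Nodup)
    (hcons : Consistent p) (hlast : ∀ i, (p i).getLast? = some r) :
    ∑ k : Fin m, {v : V | v ∈ p k ∧ Identifiable p v}.ncard ≤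
      (m ^ 2 + 3 * m - 2) / 2 := by
  classical
  set T : Finset V :=
    ((Finset.univ : Finset (Fin m)).biUnion fun i => (p i).toFinset).filter
      (fun v => Identifiable p v) with hT
  have hmemT : ∀ v : V, v ∈ T ↔ (∃ k, v ∈ p k) ∧ Identifiable p v := by
    intro v
    simp [hT, Finset.mem_filter, Finset.mem_biUnion, List.mem_toFinset]
  have hset : ∀ k : Fin m, {v : V | v ∈ p k ∧ Identifiable p v} =
      ↑(T.filter (fun v => v ∈ p k)) := by
    intro k
    ext v
    simp only [Set.mem_setOf_eq, Finset.coe_filter, Set.mem_setOf_eq, Finset.mem_coe]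
    constructor
    · rintro ⟨hv, hid⟩
      exact ⟨(hmemT v).2 ⟨⟨k, hv⟩, hid⟩, hv⟩
    · rintro ⟨hvT, hv⟩
      exact ⟨hv, ((hmemT v).1 hvT).2⟩
  have hinj : ∀ x ∈ T, ∀ y ∈ T, encoding p x = encoding p y → x = y := by
    intro x hx y hy hxy
    by_contra hne
    exact ((hmemT y).1 hy).2.2 x hne hxy
  have hsum1 : ∑ k : Fin m, {v : V | v ∈ p k ∧ Identifiable p v}.ncard =
      ∑ S ∈ T.image (encoding p), S.card := by
    calc ∑ k : Fin m, {v : V | v ∈ p k ∧ Identifiable p v}.ncard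
        = ∑ k : Fin m, (T.filter (fun v => v ∈ p k)).card := by
          refine Finset.sum_congr rfl fun k _ => ?_
          rw [hset k, Set.ncard_coe_finset]
      _ = ∑ k : Fin m, ∑ v ∈ T, (if v ∈ p k then 1 else 0) := by
          refine Finset.sum_congr rfl fun k _ => ?_
          rw [Finset.card_filter]
      _ = ∑ v ∈ T, ∑ k : Fin m, (if v ∈ p k then 1 else 0) := Finset.sum_comm
      _ = ∑ v ∈ T, (encoding p v).card := by
          refine Finset.sum_congr rfl fun v _ => ?_
          rw [encoding, Finset.card_filter]
      _ = ∑ S ∈ T.image (encoding p), S.card := (Finset.sum_image hinj).symm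
  rw [hsum1]
  set F : Finset (Finset (Fin m)) := T.image (encoding p) with hF
  rcases eq_or_ne F ∅ with hFe | hFne
  · rw [hFe, Finset.sum_empty]
    exact Nat.zero_le _
  · have hFne' : F.Nonempty := Finset.nonempty_iff_ne_empty.2 hFne
    have hbound : 2 * (∑ S ∈ F, S.card) + 2 ≤ m ^ 2 + 3 * m := by
      refine laminar_aux m Finset.univ F (by simp) (fun S _ => S.subset_univ) ?_ ?_ hFne'
      · intro S hS
        obtain ⟨v, hvT, rfl⟩ := Finset.mem_image.1 hS
        exact Finset.nonempty_iff_ne_empty.2 ((hmemT v).1 hvT).2.1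
      · intro S hS Tt hTt
        obtain ⟨v, hvT, rfl⟩ := Finset.mem_image.1 hS
        obtain ⟨w, hwT, rfl⟩ := Finset.mem_image.1 hTt
        exact enc_laminar hnodup hcons hlast v w
    rw [Nat.le_div_iff_mul_le (by norm_num : 0 < 2)]
    omega
end
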